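/- Let F be an algebraically closed field of characteristic zero and f ∈ F(z). Then f is D_z-integrable in F(z) if and only if for every root α of the denominator of f, the residue of f at z - α (i.e., the coefficient of 1/(z-α) in the partial fraction decomposition of f) is zero. -/

import Mathlib

open Polynomial
set_option linter.unusedSectionVars false
variable {F : Type} [Field F] [CharZero F]

lemma D_algebraMap (D : Derivation F (RatFunc F) (RatFunc F)) (hD : D RatFunc.X = 1)
    (p : F[X]) :
    D (algebraMap F[X] (RatFunc F) p) = algebraMap F[X] (RatFunc F) (derivative p) := by
  have h : ∀ q : F[X], algebraMap F[X] (RatFunc F) q = Polynomial.aeval RatFunc.X q := by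
    intro q
    have h2 : (Polynomial.aeval RatFunc.X : F[X] →ₐ[F] RatFunc F) =
        IsScalarTower.toAlgHom F F[X] (RatFunc F) := by
      apply Polynomial.algHom_ext
      simp [RatFunc.algebraMap_X]
    calc algebraMap F[X] (RatFunc F) q = IsScalarTower.toAlgHom F F[X] (RatFunc F) q := rfl
      _ = Polynomial.aeval RatFunc.X q := by rw [h2]
  rw [h, h, Derivation.map_aeval, hD, smul_eq_mul, mul_one]

lemma exists_antideriv (p : F[X]) : ∃ q : F[X], derivative q = p := by
  induction p using Polynomial.induction_on' with
  | add p q hp hq =>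
    obtain ⟨P, hP⟩ := hp; obtain ⟨Q, hQ⟩ := hq
    exact ⟨P + Q, by simp [hP, hQ]⟩
  | monomial n a =>
    refine ⟨monomial (n+1) (a / (n+1)), ?_⟩
    rw [derivative_monomial]
    simp only [Nat.add_sub_cancel]
    congr 1
    push_cast
    exact div_mul_cancel₀ a (Nat.cast_add_one_ne_zero n)

lemma aux_deriv (α : F) (i : ℕ) (c : F[X]) :
    (X - C α) * derivative ((X - C α) ^ i * c) =
      (X - C α) ^ i * ((i : F[X]) * c + (X - C α) * derivative c) := by
  rw [derivative_mul, derivative_pow, derivative_X_sub_C]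
  rcases i with _ | i
  · simp
  · simp only [map_natCast, Nat.add_sub_cancel, mul_one]
    rw [pow_succ]
    ring

lemma D_apply (D : Derivation F (RatFunc F) (RatFunc F)) (hD : D RatFunc.X = 1)
    (g : RatFunc F) :
    D g = algebraMap F[X] (RatFunc F) (derivative g.num * g.denom - g.num * derivative g.denom) /
      algebraMap F[X] (RatFunc F) (g.denom ^ 2) := by
  conv_lhs => rw [← g.num_div_denom]
  rw [Derivation.leibniz_div, D_algebraMap D hD, D_algebraMap D hD, smul_eq_mul, smul_eq_mul,
    smul_eq_mul, map_sub, map_mul, map_mul, map_pow]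
  have hd : algebraMap F[X] (RatFunc F) g.denom ≠ 0 := RatFunc.algebraMap_ne_zero g.denom_ne_zero
  field_simp

lemma no_simple_pole (D : Derivation F (RatFunc F) (RatFunc F)) (hD : D RatFunc.X = 1)
    (α : F) (A B : F[X]) (hA : A.eval α ≠ 0) (hB : B.eval α ≠ 0) (g : RatFunc F) :
    D g ≠ (algebraMap F[X] (RatFunc F) (X - C α))⁻¹ *
      (algebraMap F[X] (RatFunc F) A / algebraMap F[X] (RatFunc F) B) := by
  intro hEq
  have hPne : (X - C α : F[X]) ≠ 0 := X_sub_C_ne_zero α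
  have hP0 : algebraMap F[X] (RatFunc F) (X - C α) ≠ 0 := RatFunc.algebraMap_ne_zero hPne
  have hA0 : algebraMap F[X] (RatFunc F) A ≠ 0 :=
    RatFunc.algebraMap_ne_zero (fun h => hA (by simp [h]))
  have hB0 : algebraMap F[X] (RatFunc F) B ≠ 0 :=
    RatFunc.algebraMap_ne_zero (fun h => hB (by simp [h]))
  have hg0 : g ≠ 0 := by
    rintro rfl
    rw [map_zero] at hEq
    exact (mul_ne_zero (inv_ne_zero hP0) (div_ne_zero hA0 hB0)) hEq.symm
  obtain ⟨c, hnum, hc'⟩ :=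
    g.num.exists_eq_pow_rootMultiplicity_mul_and_not_dvd (RatFunc.num_ne_zero hg0) α
  obtain ⟨d, hden, hd'⟩ :=
    g.denom.exists_eq_pow_rootMultiplicity_mul_and_not_dvd g.denom_ne_zero α
  set i := g.num.rootMultiplicity α with hi
  set j := g.denom.rootMultiplicity α with hj
  have hc : c.eval α ≠ 0 := fun h => hc' (dvd_iff_isRoot.mpr h)
  have hd : d.eval α ≠ 0 := fun h => hd' (dvd_iff_isRoot.mpr h)
  rw [D_apply D hD, inv_mul_eq_div, div_div,
    div_eq_div_iff (RatFunc.algebraMap_ne_zero (pow_ne_zero 2 g.denom_ne_zero))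
      (mul_ne_zero hB0 hP0)] at hEq
  have E0 : (derivative g.num * g.denom - g.num * derivative g.denom) * (B * (X - C α)) =
      A * g.denom ^ 2 := by
    apply RatFunc.algebraMap_injective F
    rw [map_mul, map_mul, map_mul]
    exact hEq
  rw [hnum, hden] at E0
  have d1 := aux_deriv α i c
  have d2 := aux_deriv α j d
  set N := derivative c * d - c * derivative d with hN
  set M := ((i : F[X]) - (j : F[X])) * c * d + (X - C α) * N with hM
  have E1 : (X - C α) ^ (i + j + 1) * (M * B) = (X - C α) ^ (2 * j + 1) * (A * d ^ 2) := by
    rw [hM, hN]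
    linear_combination (X - C α) * E0 - (X - C α) ^ (j + 1) * d * B * d1 +
      (X - C α) ^ (i + 1) * c * B * d2
  have hMα : M.eval α = ((i : F) - (j : F)) * (c.eval α * d.eval α) := by
    simp [hM, hN, mul_assoc]
  rcases lt_trichotomy i j with hij | hij | hij
  · have E2 : M * B = (X - C α) ^ (j - i) * (A * d ^ 2) := by
      apply mul_left_cancel₀ (pow_ne_zero (i + j + 1) hPne)
      rw [E1]
      conv_rhs => rw [← mul_assoc, ← pow_add]
      congr 2
      omega
    have h3 := congrArg (Polynomial.eval α) E2
    simp only [eval_mul, eval_pow, eval_sub, eval_X, eval_C, sub_self, hMα] at h3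
    rw [zero_pow (by omega : j - i ≠ 0), zero_mul] at h3
    rcases mul_eq_zero.mp h3 with h | h
    · rcases mul_eq_zero.mp h with h | h
      · exact absurd (Nat.cast_injective (sub_eq_zero.mp h)) (Nat.ne_of_lt hij)
      · rcases mul_eq_zero.mp h with h | h
        · exact hc h
        · exact hd h
    · exact hB h
  · have E2 : M * B = A * d ^ 2 := by
      apply mul_left_cancel₀ (pow_ne_zero (i + j + 1) hPne)
      rw [E1]
      congr 2
      omega
    have h3 := congrArg (Polynomial.eval α) E2
    simp only [eval_mul, eval_pow, hMα] at h3
    rw [hij, sub_self, zero_mul, zero_mul] at h3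
    exact (mul_ne_zero hA (pow_ne_zero 2 hd)) h3.symm
  · have E2 : (X - C α) ^ (i - j) * (M * B) = A * d ^ 2 := by
      apply mul_left_cancel₀ (pow_ne_zero (2 * j + 1) hPne)
      rw [← mul_assoc, ← pow_add]
      rw [show 2 * j + 1 + (i - j) = i + j + 1 from by omega]
      exact E1
    have h3 := congrArg (Polynomial.eval α) E2
    simp only [eval_mul, eval_pow, eval_sub, eval_X, eval_C, sub_self] at h3
    rw [zero_pow (by omega : i - j ≠ 0), zero_mul] at h3
    exact (mul_ne_zero hA (pow_ne_zero 2 hd)) h3.symm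

lemma eval_num_ne_zero (f : RatFunc F) (α : F) (hα : f.denom.IsRoot α) : f.num.eval α ≠ 0 := by
  obtain ⟨u, v, huv⟩ := f.isCoprime_num_denom
  intro h
  have h2 := congrArg (Polynomial.eval α) huv
  rw [Polynomial.IsRoot] at hα
  simp only [eval_add, eval_mul, eval_one, h, mul_zero, hα, zero_add] at h2
  exact one_ne_zero h2.symm

lemma poly_case (D : Derivation F (RatFunc F) (RatFunc F)) (hD : D RatFunc.X = 1)
    (f : RatFunc F) (h : f.denom.natDegree = 0) : ∃ g, f = D g := by
  have h1 : f.denom = 1 := (f.monic_denom).natDegree_eq_zero.mp h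
  obtain ⟨q, hq⟩ := exists_antideriv f.num
  refine ⟨algebraMap F[X] (RatFunc F) q, ?_⟩
  rw [D_algebraMap D hD, hq]
  conv_lhs => rw [← f.num_div_denom]
  rw [h1, map_one, div_one]

/-- Over an algebraically closed field `F` of characteristic zero, `f ∈ F(z)` is
`D_z`-integrable iff at every root `α` of its denominator the residue of `f` at `z-α`
vanishes; vanishing of the residue at `α` is expressed as: `f` differs from a derivative
by a rational function with no pole at `α`. -/
theorem residue_criterion_algClosed (F : Type) [Field F] [CharZero F] [IsAlgClosed F]
    (D : Derivation F (RatFunc F) (RatFunc F)) (hD : D RatFunc.X = 1) (f : RatFunc F) :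
    (∃ g : RatFunc F, f = D g) ↔
      ∀ α : F, (f.denom).IsRoot α →
        ∃ g w : RatFunc F, f = D g + w ∧ ¬ (w.denom).IsRoot α := by
  constructor
  · rintro ⟨g, rfl⟩ α hα
    exact ⟨g, 0, (add_zero _).symm, by simp [RatFunc.denom_zero, Polynomial.IsRoot]⟩
  · intro H
    suffices h : ∀ (nn : ℕ) (f : RatFunc F), f.denom.natDegree ≤ nn →
        (∀ α : F, (f.denom).IsRoot α →
          ∃ g w : RatFunc F, f = D g + w ∧ ¬ (w.denom).IsRoot α) → ∃ g, f = D g from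
      h f.denom.natDegree f le_rfl H
    clear H f
    intro nn
    induction nn with
    | zero => exact fun f hdeg _ => poly_case D hD f (Nat.le_zero.mp hdeg)
    | succ nn ih =>
      intro f hdeg H
      by_cases h0 : f.denom.natDegree = 0
      · exact poly_case D hD f h0
      obtain ⟨α, hα⟩ := IsAlgClosed.exists_root f.denom (by
        intro hdeg0
        exact h0 (natDegree_eq_zero_iff_degree_le_zero.mpr (le_of_eq hdeg0)))
      have hPne : (X - C α : F[X]) ≠ 0 := X_sub_C_ne_zero α
      have hP0 : algebraMap F[X] (RatFunc F) (X - C α) ≠ 0 := RatFunc.algebraMap_ne_zero hPne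
      have hmapP : algebraMap F[X] (RatFunc F) (X - C α) = RatFunc.X - RatFunc.C α := by
        rw [map_sub, RatFunc.algebraMap_X, RatFunc.algebraMap_C]
      have hXC : (RatFunc.X - RatFunc.C α : RatFunc F) ≠ 0 := hmapP ▸ hP0
      obtain ⟨b, hden, hb'⟩ :=
        f.denom.exists_eq_pow_rootMultiplicity_mul_and_not_dvd f.denom_ne_zero α
      have hb : b.eval α ≠ 0 := fun h => hb' (dvd_iff_isRoot.mpr h)
      have hb0 : algebraMap F[X] (RatFunc F) b ≠ 0 :=
        RatFunc.algebraMap_ne_zero (fun h => hb (by simp [h]))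
      have hn1 : 1 ≤ f.denom.rootMultiplicity α := (rootMultiplicity_pos f.denom_ne_zero).mpr hα
      have ha : f.num.eval α ≠ 0 := eval_num_ne_zero f α hα
      rcases eq_or_lt_of_le hn1 with hcase | hcase
      · -- simple pole: contradiction with the residue hypothesis
        exfalso
        obtain ⟨g, w, hfw, hw⟩ := H α hα
        obtain ⟨a, hna⟩ : ∃ p, p = f.num := ⟨_, rfl⟩
        obtain ⟨wn, hwn⟩ : ∃ p, p = w.num := ⟨_, rfl⟩
        obtain ⟨wd, hwdd⟩ : ∃ p, p = w.denom := ⟨_, rfl⟩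
        have hwd : wd.eval α ≠ 0 := by rw [hwdd]; exact hw
        have hwd0 : algebraMap F[X] (RatFunc F) wd ≠ 0 := by
          rw [hwdd]; exact RatFunc.algebraMap_ne_zero w.denom_ne_zero
        have ha' : a.eval α ≠ 0 := by rw [hna]; exact ha
        refine no_simple_pole D hD α (a * wd - (X - C α) * (b * wn))
          (b * wd) ?_ (by simp only [eval_mul]; exact mul_ne_zero hb hwd) g ?_
        · simp only [eval_sub, eval_mul, eval_X, eval_C, sub_self, zero_mul, sub_zero]
          exact mul_ne_zero ha' hwd
        · have hgf : D g = f - w := by rw [hfw]; ring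
          obtain ⟨ξ, hξ⟩ : ∃ t, t = algebraMap F[X] (RatFunc F) (X - C α) := ⟨_, rfl⟩
          have hξ0 : ξ ≠ 0 := by rw [hξ]; exact hP0
          have hf : f = algebraMap F[X] (RatFunc F) a /
              (ξ * algebraMap F[X] (RatFunc F) b) := by
            conv_lhs => rw [← f.num_div_denom]
            rw [hden, ← hcase, pow_one, map_mul, hna, hξ]
          have hw' : w = algebraMap F[X] (RatFunc F) wn /
              algebraMap F[X] (RatFunc F) wd := by
            rw [hwn, hwdd]; exact w.num_div_denom.symm
          rw [hgf, hf, hw']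
          simp only [map_sub, map_mul, ← hξ]
          field_simp
      · -- pole of order ≥ 2: Hermite reduction
        obtain ⟨m, hm⟩ : ∃ m, f.denom.rootMultiplicity α = m + 2 :=
          ⟨f.denom.rootMultiplicity α - 2, by omega⟩
        rw [hm] at hden
        set L : F := f.num.eval α / b.eval α with hL
        have hroot : (f.num - C L * b).eval α = 0 := by
          simp only [eval_sub, eval_mul, eval_C, hL]
          field_simp
          ring
        obtain ⟨a₁, ha₁⟩ : (X - C α) ∣ (f.num - C L * b) := dvd_iff_isRoot.mpr hroot
        have hm1 : ((m + 1 : ℕ) : F) ≠ 0 := Nat.cast_ne_zero.mpr (by omega)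
        set cc : F := -L / ((m + 1 : ℕ) : F) with hcc
        set s : RatFunc F := algebraMap F[X] (RatFunc F) (C cc) /
          algebraMap F[X] (RatFunc F) ((X - C α) ^ (m + 1)) with hs
        have hccL : cc * ((m + 1 : ℕ) : F) = -L := by
          rw [hcc]; exact div_mul_cancel₀ (-L) hm1
        have hDs : D s = algebraMap F[X] (RatFunc F) (C L) /
            algebraMap F[X] (RatFunc F) ((X - C α) ^ (m + 2)) := by
          rw [hs, Derivation.leibniz_div, D_algebraMap D hD, D_algebraMap D hD]
          rw [derivative_C, derivative_pow, derivative_X_sub_C, Nat.add_sub_cancel, mul_one]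
          have hC : algebraMap F[X] (RatFunc F) (C cc * (C ((m+1 : ℕ) : F))) =
              algebraMap F[X] (RatFunc F) (C (-L)) := by
            rw [← C_mul, hccL]
          simp only [map_zero, map_mul, map_pow, smul_eq_mul, mul_zero, zero_sub, smul_neg,
            neg_mul, map_neg]
          have hC2 : RatFunc.C cc * ((m : RatFunc F) + 1) = - RatFunc.C L := by
            rw [← map_natCast (RatFunc.C (K := F)) m, ← map_one (RatFunc.C (K := F)),
              ← map_add, ← map_mul, ← map_neg]
            congr 1
            rw [← hccL]
            push_cast
            ring
          simp only [map_mul, map_neg] at hC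
          field_simp
          linear_combination (-(algebraMap F[X] (RatFunc F) (X - C α)) ^ (2 * m + 2)) * hC
        have key : f - D s = algebraMap F[X] (RatFunc F) a₁ /
            algebraMap F[X] (RatFunc F) ((X - C α) ^ (m + 1) * b) := by
          rw [hDs]
          conv_lhs => rw [← f.num_div_denom, hden]
          have ha₁' := congrArg (algebraMap F[X] (RatFunc F)) ha₁
          simp only [map_sub, map_mul] at ha₁'
          simp only [map_mul, map_pow, hmapP, RatFunc.algebraMap_C, RatFunc.algebraMap_X] at ha₁' ⊢
          rw [div_sub_div _ _ (mul_ne_zero (pow_ne_zero _ hXC) hb0) (pow_ne_zero _ hXC),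
            div_eq_div_iff
              (mul_ne_zero (mul_ne_zero (pow_ne_zero _ hXC) hb0) (pow_ne_zero _ hXC))
              (mul_ne_zero (pow_ne_zero _ hXC) hb0)]
          linear_combination (RatFunc.X - RatFunc.C α) ^ (2 * m + 3) *
            algebraMap F[X] (RatFunc F) b * ha₁'
        have hq0 : (X - C α) ^ (m + 1) * b ≠ 0 :=
          mul_ne_zero (pow_ne_zero _ hPne) (fun h => hb (by simp [h]))
        have hfd : (f - D s).denom ∣ (X - C α) ^ (m + 1) * b :=
          (RatFunc.denom_dvd hq0).mpr ⟨a₁, key⟩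
        have hdeg₁ : (f - D s).denom.natDegree ≤ nn := by
          have h1 := natDegree_le_of_dvd hfd hq0
          have h2 : ((X - C α) ^ (m + 1) * b).natDegree = (m + 1) + b.natDegree := by
            rw [natDegree_mul (pow_ne_zero _ hPne) (fun h => hb (by simp [h])),
              natDegree_pow, natDegree_X_sub_C, mul_one]
          have h3 : f.denom.natDegree = (m + 2) + b.natDegree := by
            rw [hden, natDegree_mul (pow_ne_zero _ hPne) (fun h => hb (by simp [h])),
              natDegree_pow, natDegree_X_sub_C, mul_one]
          omega
        have H₁ : ∀ β : F, ((f - D s).denom).IsRoot β →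
            ∃ g w : RatFunc F, f - D s = D g + w ∧ ¬ (w.denom).IsRoot β := by
          intro β hβ
          have hroot : f.denom.IsRoot β := by
            refine hβ.dvd (hfd.trans ?_)
            rw [hden]
            exact mul_dvd_mul (pow_dvd_pow _ (by omega)) dvd_rfl
          obtain ⟨g, w, hfgw, hw⟩ := H β hroot
          exact ⟨g - s, w, by rw [map_sub, hfgw]; ring, hw⟩
        obtain ⟨g₁, hg₁⟩ := ih (f - D s) hdeg₁ H₁
        exact ⟨g₁ + s, by rw [map_add, ← hg₁]; ring⟩
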